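/- arXiv:2206.06318 — 3 statements merged into one kernel-verified Lean document; each statement's English description precedes it below -/
import Mathlib

section
/- Let M^(n) be the (n-1)×(n-1) tridiagonal matrix with diagonal entries (a_1+b_1, ..., a_{n-1}+b_{n-1}), superdiagonal entries -a_1, ..., -a_{n-2}, and subdiagonal entries -b_2, ..., -b_{n-1}. Then det(M^(n)) = Σ_{i=1}^{n} (∏_{j=i}^{n-1} a_j)(∏_{j=1}^{i-1} b_j). -/
open Finset

open Finset

noncomputable def triT (a b : ℕ → ℝ) (m : ℕ) : Matrix (Fin m) (Fin m) ℝ :=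
  Matrix.of fun i j =>
    if (i : ℕ) = (j : ℕ) then a ((i : ℕ) + 1) + b ((i : ℕ) + 1)
    else if (j : ℕ) = (i : ℕ) + 1 then -a ((i : ℕ) + 1)
    else if (j : ℕ) + 1 = (i : ℕ) then -b ((i : ℕ) + 1)
    else 0

lemma triT_apply (a b : ℕ → ℝ) (m : ℕ) (i j : Fin m) :
    triT a b m i j =
      if (i : ℕ) = (j : ℕ) then a ((i : ℕ) + 1) + b ((i : ℕ) + 1)
      else if (j : ℕ) = (i : ℕ) + 1 then -a ((i : ℕ) + 1)
      else if (j : ℕ) + 1 = (i : ℕ) then -b ((i : ℕ) + 1)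
      else 0 := rfl

lemma val_succAbove {n : ℕ} (p : Fin (n+1)) (i : Fin n) :
    ((p.succAbove i : Fin (n+1)) : ℕ) = if (i:ℕ) < (p:ℕ) then (i:ℕ) else (i:ℕ)+1 := by
  rw [Fin.succAbove]
  split_ifs with h1 h2 h2
  · rfl
  · exact absurd (by simpa [Fin.lt_def] using h1) h2
  · exact absurd (by simpa [Fin.lt_def] using h2) h1
  · rfl

lemma triT_rec (a b : ℕ → ℝ) (m : ℕ) :
    (triT a b (m+2)).det = (a (m+2) + b (m+2)) * (triT a b (m+1)).det
      - a (m+1) * b (m+2) * (triT a b m).det := by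
  set A := triT a b (m+2) with hA
  set jm : Fin (m+2) := ⟨m, by omega⟩ with hjm
  set jl : Fin (m+2) := Fin.last (m+1) with hjl
  rw [Matrix.det_succ_row A (Fin.last (m+1))]
  rw [← Finset.sum_subset (Finset.subset_univ ({jm, jl} : Finset (Fin (m+2))))
      (fun j _ hj => ?_)]
  swap
  · -- zero entries
    have h1 : (j : ℕ) ≠ m := fun h => hj (by simp [hjm, hjl, Fin.ext_iff, h])
    have h2 : (j : ℕ) ≠ m + 1 := fun h => hj (by simp [hjm, hjl, Fin.ext_iff, h])
    have hjlt : (j : ℕ) < m + 2 := j.isLt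
    have : A (Fin.last (m+1)) j = 0 := by
      rw [hA, triT_apply]
      simp only [Fin.val_last]
      split_ifs with c1 c2 c3 <;> first | rfl | omega
    simp [this]
  have hne : jm ≠ jl := by simp [hjm, hjl, Fin.ext_iff]
  rw [Finset.sum_pair hne]
  -- values of entries in the last row
  have hAjl : A (Fin.last (m+1)) jl = a (m+2) + b (m+2) := by
    rw [hA, triT_apply]; norm_num [hjl]
  have hAjm : A (Fin.last (m+1)) jm = -b (m+2) := by
    rw [hA, triT_apply]
    simp only [Fin.val_last, hjm]
    split_ifs with c1 c2 c3 <;> first | omega | norm_num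
  -- the jl-minor is triT a b (m+1)
  have hMl : A.submatrix (Fin.last (m+1)).succAbove jl.succAbove = triT a b (m+1) := by
    ext i j
    rw [Matrix.submatrix_apply, hA, triT_apply, triT_apply, hjl, Fin.succAbove_last]
    simp [Fin.coe_castSucc]
  -- the jm-minor
  have hMm : (A.submatrix (Fin.last (m+1)).succAbove jm.succAbove).det
      = -a (m+1) * (triT a b m).det := by
    set B := A.submatrix (Fin.last (m+1)).succAbove jm.succAbove with hB
    have hBe : ∀ (i : Fin (m+1)) (k : Fin (m+1)), B i k
        = if (i:ℕ) = (if (k:ℕ) < m then (k:ℕ) else (k:ℕ)+1) then a ((i:ℕ)+1) + b ((i:ℕ)+1)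
          else if (if (k:ℕ) < m then (k:ℕ) else (k:ℕ)+1) = (i:ℕ)+1 then -a ((i:ℕ)+1)
          else if (if (k:ℕ) < m then (k:ℕ) else (k:ℕ)+1) + 1 = (i:ℕ) then -b ((i:ℕ)+1)
          else 0 := by
      intro i k
      rw [hB, Matrix.submatrix_apply, hA, triT_apply, Fin.succAbove_last]
      rw [val_succAbove]
      simp [hjm, Fin.coe_castSucc]
    rw [Matrix.det_succ_column B (Fin.last m)]
    rw [← Finset.sum_subset (Finset.subset_univ ({Fin.last m} : Finset (Fin (m+1))))
        (fun i _ hi => ?_)]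
    swap
    · have h1 : (i : ℕ) ≠ m := fun h => hi (by simp [Fin.ext_iff, h])
      have hilt : (i : ℕ) < m + 1 := i.isLt
      have : B i (Fin.last m) = 0 := by
        rw [hBe]
        simp only [Fin.val_last]
        split_ifs with c1 c2 c3 <;> first | rfl | omega
      simp [this]
    rw [Finset.sum_singleton]
    have hBv : B (Fin.last m) (Fin.last m) = -a (m+1) := by
      rw [hBe]
      simp only [Fin.val_last]
      split_ifs with c1 c2 c3 <;> first | omega | norm_num
    have hMinner : B.submatrix (Fin.last m).succAbove (Fin.last m).succAbove = triT a b m := by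
      ext i k
      rw [Matrix.submatrix_apply, Fin.succAbove_last, hBe, triT_apply]
      have hk : (k : ℕ) < m := k.isLt
      simp [Fin.coe_castSucc, hk]
    rw [hMinner, hBv]
    simp only [Fin.val_last]
    have hsgn : (-1 : ℝ) ^ (m + m) = 1 := by
      have : m + m = 2 * m := by ring
      rw [this, pow_mul]; norm_num
    rw [hsgn]; ring
  rw [hAjl, hAjm, hMl, hMm]
  simp only [hjm, hjl, Fin.val_last, Fin.val_mk]
  have hs1 : (-1 : ℝ) ^ (m + 1 + (m + 1)) = 1 := by
    have : m + 1 + (m + 1) = 2 * (m + 1) := by ring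
    rw [this, pow_mul]; norm_num
  have hs2 : (-1 : ℝ) ^ (m + 1 + m) = (-1) := by
    have : m + 1 + m = 2 * m + 1 := by ring
    rw [this, pow_succ, pow_mul]; norm_num
  rw [hs1, hs2]; ring

section helpers
variable (a b : ℕ → ℝ)

lemma key (k : ℕ) :
    a (k+1) * ∑ i ∈ Icc 1 (k+1), (∏ j ∈ Icc i k, a j) * ∏ j ∈ Icc 1 (i-1), b j
      = ∑ i ∈ Icc 1 (k+1), (∏ j ∈ Icc i (k+1), a j) * ∏ j ∈ Icc 1 (i-1), b j := by
  rw [Finset.mul_sum]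
  refine Finset.sum_congr rfl fun i hi => ?_
  rw [Finset.prod_Icc_succ_top (Finset.mem_Icc.mp hi).2]
  ring

lemma Dstep (m : ℕ) :
    (a (m+2) + b (m+2)) * (∑ i ∈ Icc 1 (m+2), (∏ j ∈ Icc i (m+1), a j) * ∏ j ∈ Icc 1 (i-1), b j)
      - a (m+1) * b (m+2) * (∑ i ∈ Icc 1 (m+1), (∏ j ∈ Icc i m, a j) * ∏ j ∈ Icc 1 (i-1), b j)
    = ∑ i ∈ Icc 1 (m+3), (∏ j ∈ Icc i (m+2), a j) * ∏ j ∈ Icc 1 (i-1), b j := by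
  have e3 := key a b (m+1)
  have e4 := key a b m
  have e1 : (∑ i ∈ Icc 1 (m+2), (∏ j ∈ Icc i (m+1), a j) * ∏ j ∈ Icc 1 (i-1), b j)
      = (∑ i ∈ Icc 1 (m+1), (∏ j ∈ Icc i (m+1), a j) * ∏ j ∈ Icc 1 (i-1), b j)
        + ∏ j ∈ Icc 1 (m+1), b j := by
    rw [show m+2 = (m+1)+1 from rfl, Finset.sum_Icc_succ_top (by omega : (1:ℕ) ≤ m+1+1)]
    congr 1
    rw [Finset.Icc_eq_empty (by omega), Finset.prod_empty]
    norm_num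
  have e2 : (∑ i ∈ Icc 1 (m+3), (∏ j ∈ Icc i (m+2), a j) * ∏ j ∈ Icc 1 (i-1), b j)
      = (∑ i ∈ Icc 1 (m+2), (∏ j ∈ Icc i (m+2), a j) * ∏ j ∈ Icc 1 (i-1), b j)
        + ∏ j ∈ Icc 1 (m+2), b j := by
    rw [show m+3 = (m+2)+1 from rfl, Finset.sum_Icc_succ_top (by omega : (1:ℕ) ≤ m+2+1)]
    congr 1
    rw [Finset.Icc_eq_empty (by omega), Finset.prod_empty]
    norm_num
  have e5 : (∏ j ∈ Icc 1 (m+2), b j) = b (m+2) * ∏ j ∈ Icc 1 (m+1), b j := by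
    rw [show m+2 = (m+1)+1 from rfl, Finset.prod_Icc_succ_top (by omega : (1:ℕ) ≤ m+1+1)]
    ring
  linear_combination e3 + b (m+2) * e1 - b (m+2) * e4 - e2 - e5

end helpers

lemma triT_det (a b : ℕ → ℝ) : ∀ m : ℕ, (triT a b m).det =
    ∑ i ∈ Icc 1 (m+1), (∏ j ∈ Icc i m, a j) * ∏ j ∈ Icc 1 (i-1), b j
  | 0 => by
    simp [Matrix.det_isEmpty]
  | 1 => by
    rw [Matrix.det_fin_one, triT_apply]
    norm_num [Finset.sum_Icc_succ_top (by omega : (1:ℕ) ≤ 2), Finset.Icc_eq_empty (by omega : ¬ (2:ℕ) ≤ 1)]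
  | (m+2) => by
    rw [triT_rec, triT_det a b (m+1), triT_det a b m]
    have := Dstep a b m
    convert this using 3 <;> omega

/-- The `(n-1)×(n-1)` tridiagonal matrix `M = I - T` of a birth-death chain:
diagonal `a_i + b_i`, superdiagonal `-a_i`, subdiagonal `-b_i`
(rows/columns indexed by the transient states `1,...,n-1`). -/
noncomputable def triM (a b : ℕ → ℝ) (n : ℕ) : Matrix (Fin (n - 1)) (Fin (n - 1)) ℝ :=
  Matrix.of fun i j =>
    if (i : ℕ) = (j : ℕ) then a ((i : ℕ) + 1) + b ((i : ℕ) + 1)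
    else if (j : ℕ) = (i : ℕ) + 1 then -a ((i : ℕ) + 1)
    else if (j : ℕ) + 1 = (i : ℕ) then -b ((i : ℕ) + 1)
    else 0

/-- `det(I - T) = Δ = ∑_{i=1}^n ∏_{j=i}^{n-1} a_j ∏_{j=1}^{i-1} b_j`. -/
theorem det_triM (n : ℕ) (hn : 2 ≤ n) (a b : ℕ → ℝ) :
    (triM a b n).det =
      ∑ i ∈ Icc 1 n, (∏ j ∈ Icc i (n - 1), a j) * ∏ j ∈ Icc 1 (i - 1), b j := by
  have h : triM a b n = triT a b (n-1) := rfl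
  have h2 : n - 1 + 1 = n := by omega
  rw [h, triT_det a b (n-1), h2]
end

section
/- Assume Δ = Σ_{k=1}^{n} (∏_{l=k}^{n-1} a_l)(∏_{l=1}^{k-1} b_l) ≠ 0. Then the matrix M = I - T (the (n-1)×(n-1) tridiagonal matrix with diagonal a_i+b_i, superdiagonal -a_i, subdiagonal -b_i) is invertible, and its inverse has entries (M^{-1})_{i,j} = (1/Δ) · (Σ_{k=1}^{min{i,j}} ∏_{l=k}^{j-1} a_l ∏_{l=1}^{k-1} b_l) · (Σ_{k=max{i,j}+1}^{n} ∏_{l=k}^{n-1} a_l ∏_{l=j+1}^{k-1} b_l). -/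
open Finset

namespace TriMAux

noncomputable def u (a b : ℕ → ℝ) (j m : ℕ) : ℝ :=
  ∑ k ∈ Icc 1 m, (∏ l ∈ Icc k j, a l) * ∏ l ∈ Icc 1 (k - 1), b l

noncomputable def v (a b : ℕ → ℝ) (n j m : ℕ) : ℝ :=
  ∑ k ∈ Icc (m + 1) n, (∏ l ∈ Icc k (n - 1), a l) * ∏ l ∈ Icc (j + 2) (k - 1), b l

noncomputable def f (a b : ℕ → ℝ) (n j m : ℕ) : ℝ :=
  u a b j (min m (j + 1)) * v a b n j (max m (j + 1))

lemma u_succ (a b : ℕ → ℝ) (j m : ℕ) :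
    u a b j (m + 1) = u a b j m + (∏ l ∈ Icc (m + 1) j, a l) * ∏ l ∈ Icc 1 m, b l := by
  unfold u
  rw [Finset.sum_Icc_succ_top (by omega)]
  simp

lemma v_bot (a b : ℕ → ℝ) (n j m : ℕ) (h : m + 1 ≤ n) :
    v a b n j m = (∏ l ∈ Icc (m + 1) (n - 1), a l) * (∏ l ∈ Icc (j + 2) m, b l)
      + v a b n j (m + 1) := by
  unfold v
  rw [← Finset.Ico_add_one_right_eq_Icc (m + 1) n, Finset.sum_eq_sum_Ico_succ_bot (by omega),
    Finset.Ico_add_one_right_eq_Icc]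
  simp

lemma f_zero (a b : ℕ → ℝ) (n j : ℕ) : f a b n j 0 = 0 := by
  unfold f u
  simp [Nat.min_eq_left (by omega : 0 ≤ j + 1)]

lemma f_n (a b : ℕ → ℝ) (n j : ℕ) : f a b n j n = 0 := by
  unfold f v
  rw [Finset.Icc_eq_empty (by omega : ¬ max n (j + 1) + 1 ≤ n)]
  simp

lemma rec_lt (a b : ℕ → ℝ) (n j i : ℕ) (hij : i < j) :
    -b (i + 1) * f a b n j i + (a (i + 1) + b (i + 1)) * f a b n j (i + 1)
      - a (i + 1) * f a b n j (i + 2) = 0 := by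
  unfold f
  rw [min_eq_left (by omega : i ≤ j + 1), max_eq_right (by omega : i ≤ j + 1),
    min_eq_left (by omega : i + 1 ≤ j + 1), max_eq_right (by omega : i + 1 ≤ j + 1),
    min_eq_left (by omega : i + 2 ≤ j + 1), max_eq_right (by omega : i + 2 ≤ j + 1)]
  rw [show i + 2 = (i + 1) + 1 from rfl, u_succ a b j (i + 1), u_succ a b j i]
  rw [show Icc (i + 1) j = Ico (i + 1) (j + 1) from (Finset.Ico_add_one_right_eq_Icc _ _).symm,
    Finset.prod_eq_prod_Ico_succ_bot (by omega), Finset.Ico_add_one_right_eq_Icc,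
    Finset.prod_Icc_succ_top (by omega : 1 ≤ i + 1)]
  ring

lemma rec_gt (a b : ℕ → ℝ) (n j i : ℕ) (hji : j < i) (hi : i ≤ n - 2) (hn : 2 ≤ n) :
    -b (i + 1) * f a b n j i + (a (i + 1) + b (i + 1)) * f a b n j (i + 1)
      - a (i + 1) * f a b n j (i + 2) = 0 := by
  unfold f
  rw [min_eq_right (by omega : j + 1 ≤ i), max_eq_left (by omega : j + 1 ≤ i),
    min_eq_right (by omega : j + 1 ≤ i + 1), max_eq_left (by omega : j + 1 ≤ i + 1),
    min_eq_right (by omega : j + 1 ≤ i + 2), max_eq_left (by omega : j + 1 ≤ i + 2)]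
  rw [v_bot a b n j i (by omega), v_bot a b n j (i + 1) (by omega)]
  rw [show Icc (i + 1) (n - 1) = Ico (i + 1) (n - 1 + 1) from (Finset.Ico_add_one_right_eq_Icc _ _).symm,
    Finset.prod_eq_prod_Ico_succ_bot (by omega), Finset.Ico_add_one_right_eq_Icc,
    show i + 1 = i + 1 from rfl,
    Finset.prod_Icc_succ_top (by omega : j + 2 ≤ i + 1)]
  ring

lemma rec_eq (a b : ℕ → ℝ) (n j : ℕ) (hj : j + 1 ≤ n - 1) (hn : 2 ≤ n) :
    -b (j + 1) * f a b n j j + (a (j + 1) + b (j + 1)) * f a b n j (j + 1)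
      - a (j + 1) * f a b n j (j + 2)
    = ∑ i ∈ Icc 1 n, (∏ k ∈ Icc i (n - 1), a k) * ∏ k ∈ Icc 1 (i - 1), b k := by
  unfold f
  rw [min_eq_left (by omega : j ≤ j + 1), max_eq_right (by omega : j ≤ j + 1),
    min_self, max_self,
    min_eq_right (by omega : j + 1 ≤ j + 2), max_eq_left (by omega : j + 1 ≤ j + 2)]
  have hu : u a b j (j + 1) = u a b j j + ∏ l ∈ Icc 1 j, b l := by
    rw [u_succ]; rw [Finset.Icc_eq_empty (by omega : ¬ j + 1 ≤ j)]; simp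
  have hv : v a b n j (j + 1) = (∏ l ∈ Icc (j + 2) (n - 1), a l) + v a b n j (j + 2) := by
    rw [v_bot a b n j (j + 1) (by omega)]
    rw [Finset.Icc_eq_empty (by omega : ¬ j + 2 ≤ j + 1)]; simp
  have claim1 : b (j + 1) * (∏ l ∈ Icc 1 j, b l) * v a b n j (j + 1)
      = ∑ k ∈ Icc (j + 2) n, (∏ l ∈ Icc k (n - 1), a l) * ∏ l ∈ Icc 1 (k - 1), b l := by
    unfold v
    rw [Finset.mul_sum]
    refine Finset.sum_congr rfl fun k hk => ?_
    simp only [mem_Icc] at hk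
    have hsplit : ∏ l ∈ Icc 1 (k - 1), b l
        = ((∏ l ∈ Icc 1 j, b l) * b (j + 1)) * ∏ l ∈ Icc (j + 2) (k - 1), b l := by
      rw [show Icc 1 (k - 1) = Ioc 0 (k - 1) from Finset.Icc_add_one_left_eq_Ioc 0 _,
        show Icc (j + 2) (k - 1) = Ioc (j + 1) (k - 1) from Finset.Icc_add_one_left_eq_Ioc _ _,
        show Icc 1 j = Ioc 0 j from Finset.Icc_add_one_left_eq_Ioc 0 j,
        ← Finset.prod_Ioc_consecutive _ (by omega : 0 ≤ j + 1) (by omega : j + 1 ≤ k - 1),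
        Finset.prod_Ioc_succ_top (by omega : 0 ≤ j)]
    rw [hsplit]; ring
  have claim2 : a (j + 1) * (∏ l ∈ Icc (j + 2) (n - 1), a l) * u a b j (j + 1)
      = ∑ k ∈ Icc 1 (j + 1), (∏ l ∈ Icc k (n - 1), a l) * ∏ l ∈ Icc 1 (k - 1), b l := by
    unfold u
    rw [Finset.mul_sum]
    refine Finset.sum_congr rfl fun k hk => ?_
    simp only [mem_Icc] at hk
    obtain ⟨k, rfl⟩ : ∃ k', k = k' + 1 := ⟨k - 1, by omega⟩
    have hsplit : ∏ l ∈ Icc (k + 1) (n - 1), a l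
        = ((∏ l ∈ Icc (k + 1) j, a l) * a (j + 1)) * ∏ l ∈ Icc (j + 2) (n - 1), a l := by
      rw [Finset.Icc_add_one_left_eq_Ioc k (n - 1), Finset.Icc_add_one_left_eq_Ioc k j,
        show Icc (j + 2) (n - 1) = Ioc (j + 1) (n - 1) from Finset.Icc_add_one_left_eq_Ioc _ _,
        ← Finset.prod_Ioc_consecutive _ (by omega : k ≤ j + 1) (by omega : j + 1 ≤ n - 1),
        Finset.prod_Ioc_succ_top (by omega : k ≤ j)]
    rw [hsplit]; ring
  have claim3 : (∑ i ∈ Icc 1 n, (∏ k ∈ Icc i (n - 1), a k) * ∏ k ∈ Icc 1 (i - 1), b k)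
      = (∑ k ∈ Icc 1 (j + 1), (∏ l ∈ Icc k (n - 1), a l) * ∏ l ∈ Icc 1 (k - 1), b l)
        + ∑ k ∈ Icc (j + 2) n, (∏ l ∈ Icc k (n - 1), a l) * ∏ l ∈ Icc 1 (k - 1), b l := by
    rw [show Icc 1 (j + 1) = Ioc 0 (j + 1) from Finset.Icc_add_one_left_eq_Ioc 0 _,
      show Icc (j + 2) n = Ioc (j + 1) n from Finset.Icc_add_one_left_eq_Ioc _ _,
      show Icc 1 n = Ioc 0 n from Finset.Icc_add_one_left_eq_Ioc 0 _]
    exact (Finset.sum_Ioc_consecutive _ (by omega) (by omega)).symm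
  rw [claim3, ← claim1, ← claim2, hu, hv]
  ring

lemma row_sum (a b : ℕ → ℝ) (n : ℕ) (g : ℕ → ℝ) (hg0 : g 0 = 0) (hgn : g n = 0)
    (i : ℕ) (hi : i < n - 1) (hn : 2 ≤ n) :
    (∑ k ∈ range (n - 1),
      (if i = k then a (i + 1) + b (i + 1)
        else if k = i + 1 then -a (i + 1)
        else if k + 1 = i then -b (i + 1) else 0) * g (k + 1))
    = -b (i + 1) * g i + (a (i + 1) + b (i + 1)) * g (i + 1) - a (i + 1) * g (i + 2) := by
  have hsplit : ∀ k, (if i = k then a (i + 1) + b (i + 1)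
        else if k = i + 1 then -a (i + 1)
        else if k + 1 = i then -b (i + 1) else 0) * g (k + 1)
      = (if k = i then (a (i + 1) + b (i + 1)) * g (k + 1) else 0)
        + ((if k = i + 1 then -a (i + 1) * g (k + 1) else 0)
          + (if k + 1 = i then -b (i + 1) * g (k + 1) else 0)) := by
    intro k
    split_ifs <;> first | (exfalso; omega) | ring1
  rw [Finset.sum_congr rfl fun k _ => hsplit k, Finset.sum_add_distrib,
    Finset.sum_add_distrib, Finset.sum_ite_eq' (range (n - 1)) i,
    Finset.sum_ite_eq' (range (n - 1)) (i + 1)]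
  have h1 : (if i ∈ range (n - 1) then (a (i + 1) + b (i + 1)) * g (i + 1) else 0)
      = (a (i + 1) + b (i + 1)) * g (i + 1) := by
    rw [if_pos (mem_range.mpr hi)]
  have h2 : (if i + 1 ∈ range (n - 1) then -a (i + 1) * g (i + 1 + 1) else 0)
      = -a (i + 1) * g (i + 2) := by
    by_cases h : i + 1 < n - 1
    · rw [if_pos (mem_range.mpr h)]
    · rw [if_neg (by simpa using h), show i + 2 = n by omega, hgn]; ring
  have h3 : (∑ k ∈ range (n - 1), if k + 1 = i then -b (i + 1) * g (k + 1) else 0)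
      = -b (i + 1) * g i := by
    rcases Nat.eq_zero_or_pos i with rfl | hpos
    · rw [hg0]
      have : ∀ k ∈ range (n - 1), (if k + 1 = 0 then -b (0 + 1) * g (k + 1) else 0) = 0 := by
        intro k _; rw [if_neg (by omega)]
      rw [Finset.sum_congr rfl this]; simp
    · have : ∀ k ∈ range (n - 1), (if k + 1 = i then -b (i + 1) * g (k + 1) else 0)
          = (if k = i - 1 then -b (i + 1) * g (k + 1) else 0) := by
        intro k _
        congr 1
        simp only [eq_iff_iff]; omega
      rw [Finset.sum_congr rfl this, Finset.sum_ite_eq' (range (n - 1)) (i - 1),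
        if_pos (mem_range.mpr (by omega)), show i - 1 + 1 = i by omega]
  rw [h1, h2, h3]
  ring

end TriMAux

/-- If `Δ ≠ 0` then `M = I - T` is invertible and
`(M⁻¹)_{i,j} = (1/Δ)(∑_{k=1}^{min(i,j)} ∏_{l=k}^{j-1} a_l ∏_{l=1}^{k-1} b_l)
              (∑_{k=max(i,j)+1}^{n} ∏_{l=k}^{n-1} a_l ∏_{l=j+1}^{k-1} b_l)`. -/
theorem triM_inverse (n : ℕ) (hn : 2 ≤ n) (a b : ℕ → ℝ)
    (hΔ : (∑ i ∈ Icc 1 n, (∏ j ∈ Icc i (n - 1), a j) * ∏ j ∈ Icc 1 (i - 1), b j) ≠ 0) :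
    IsUnit (triM a b n) ∧
    ∀ i j : Fin (n - 1),
      (triM a b n)⁻¹ i j =
        (1 / (∑ i ∈ Icc 1 n, (∏ j ∈ Icc i (n - 1), a j) * ∏ j ∈ Icc 1 (i - 1), b j)) *
          ((∑ k ∈ Icc 1 (min ((i : ℕ) + 1) ((j : ℕ) + 1)),
              (∏ l ∈ Icc k (j : ℕ), a l) * ∏ l ∈ Icc 1 (k - 1), b l) *
            ∑ k ∈ Icc (max ((i : ℕ) + 1) ((j : ℕ) + 1) + 1) n,
              (∏ l ∈ Icc k (n - 1), a l) * ∏ l ∈ Icc ((j : ℕ) + 2) (k - 1), b l) := by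
  set Δ := ∑ i ∈ Icc 1 n, (∏ j ∈ Icc i (n - 1), a j) * ∏ j ∈ Icc 1 (i - 1), b j with hΔdef
  set N : Matrix (Fin (n - 1)) (Fin (n - 1)) ℝ :=
    Matrix.of fun i j : Fin (n - 1) => (1 / Δ) * TriMAux.f a b n (j : ℕ) ((i : ℕ) + 1) with hN
  have hmul : triM a b n * N = 1 := by
    ext i j
    rw [Matrix.mul_apply, Matrix.one_apply]
    have hrow : ∀ k : Fin (n - 1), triM a b n i k * N k j
        = (1 / Δ) * ((if (i : ℕ) = (k : ℕ) then a ((i : ℕ) + 1) + b ((i : ℕ) + 1)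
            else if (k : ℕ) = (i : ℕ) + 1 then -a ((i : ℕ) + 1)
            else if (k : ℕ) + 1 = (i : ℕ) then -b ((i : ℕ) + 1) else 0)
            * TriMAux.f a b n (j : ℕ) ((k : ℕ) + 1)) := by
      intro k
      simp only [hN, triM, Matrix.of_apply]
      ring
    rw [Finset.sum_congr rfl fun k _ => hrow k, ← Finset.mul_sum]
    rw [Fin.sum_univ_eq_sum_range (fun k =>
      (if (i : ℕ) = k then a ((i : ℕ) + 1) + b ((i : ℕ) + 1)
        else if k = (i : ℕ) + 1 then -a ((i : ℕ) + 1)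
        else if k + 1 = (i : ℕ) then -b ((i : ℕ) + 1) else 0)
        * TriMAux.f a b n (j : ℕ) (k + 1)) (n - 1)]
    rw [TriMAux.row_sum a b n (TriMAux.f a b n (j : ℕ)) (TriMAux.f_zero a b n (j : ℕ))
      (TriMAux.f_n a b n (j : ℕ)) (i : ℕ) i.isLt hn]
    rcases lt_trichotomy ((i : ℕ)) ((j : ℕ)) with h | h | h
    · rw [TriMAux.rec_lt a b n (j : ℕ) (i : ℕ) h, mul_zero,
        if_neg (by simp [Fin.ext_iff]; omega)]
    · rw [h, TriMAux.rec_eq a b n (j : ℕ) (by omega) hn, ← hΔdef,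
        if_pos (Fin.ext h), one_div, inv_mul_cancel₀ hΔ]
    · rw [TriMAux.rec_gt a b n (j : ℕ) (i : ℕ) h (by omega) hn, mul_zero,
        if_neg (by simp [Fin.ext_iff]; omega)]
  refine ⟨(Matrix.isUnit_iff_isUnit_det _).mpr (Matrix.isUnit_det_of_right_inverse hmul), ?_⟩
  intro i j
  rw [Matrix.inv_eq_right_inv hmul]
  rfl
end

section
/- Under the birth-death chain setup with a_y, b_y > 0, the expected absorption time τ_y starting from state y (the unique solution of τ_y = 1 + a_y τ_{y+1} + b_y τ_{y-1} + (1-a_y-b_y)τ_y with τ_0 = τ_n = 0) equals τ_y = (1/Δ) Σ_{j=1}^{n-1} (Σ_{k=1}^{min{y,j}} ∏_{l=k}^{j-1} a_l ∏_{l=1}^{k-1} b_l)(Σ_{k=max{y,j}+1}^{n} ∏_{l=k}^{n-1} a_l ∏_{l=j+1}^{k-1} b_l). -/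
open Finset

private lemma bd_sum_Icc_bot {M : Type*} [AddCommMonoid M] {m n : ℕ} (h : m ≤ n) (f : ℕ → M) :
    ∑ k ∈ Icc m n, f k = f m + ∑ k ∈ Icc (m + 1) n, f k := by
  rw [Finset.Icc_eq_cons_Ioc h, Finset.sum_cons, ← Finset.Icc_add_one_left_eq_Ioc]

private lemma bd_prod_Icc_bot {M : Type*} [CommMonoid M] {m n : ℕ} (h : m ≤ n) (f : ℕ → M) :
    ∏ k ∈ Icc m n, f k = f m * ∏ k ∈ Icc (m + 1) n, f k := by
  rw [Finset.Icc_eq_cons_Ioc h, Finset.prod_cons, ← Finset.Icc_add_one_left_eq_Ioc]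

private lemma bd_prod_glue (f : ℕ → ℝ) {k y m : ℕ} (hk : 1 ≤ k) (hky : k ≤ y)
    (hym : y ≤ m + 1) :
    (∏ l ∈ Icc k (y - 1), f l) * ∏ l ∈ Icc y m, f l = ∏ l ∈ Icc k m, f l := by
  have h1 : Icc k (y - 1) = Ioc (k - 1) (y - 1) := by
    rw [← Finset.Icc_add_one_left_eq_Ioc]; congr 1; omega
  have h2 : Icc y m = Ioc (y - 1) m := by
    rw [← Finset.Icc_add_one_left_eq_Ioc]; congr 1; omega
  have h3 : Icc k m = Ioc (k - 1) m := by
    rw [← Finset.Icc_add_one_left_eq_Ioc]; congr 1; omega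
  rw [h1, h2, h3]
  exact Finset.prod_Ioc_consecutive f (by omega) (by omega)

private lemma bd_uniq (n : ℕ) (hn : 1 ≤ n) (a b e : ℕ → ℝ)
    (ha : ∀ y, 1 ≤ y → y ≤ n - 1 → 0 < a y)
    (hb : ∀ y, 1 ≤ y → y ≤ n - 1 → 0 < b y)
    (h0 : e 0 = 0) (hN : e n = 0)
    (hrec : ∀ y, 1 ≤ y → y ≤ n - 1 →
      a y * e (y + 1) + b y * e (y - 1) = (a y + b y) * e y) :
    ∀ y ≤ n, e y = 0 := by
  have hd : ∀ y, y ≤ n - 1 → e (y + 1) - e y = (∏ l ∈ Icc 1 y, b l / a l) * e 1 := by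
    intro y
    induction y with
    | zero => intro _; simp [h0]
    | succ m ih =>
      intro hm
      have hm' : m ≤ n - 1 := by omega
      have h1 : 1 ≤ m + 1 := by omega
      have hae := ha (m + 1) h1 hm
      have hbe := hb (m + 1) h1 hm
      have hr := hrec (m + 1) h1 hm
      simp only [Nat.add_sub_cancel] at hr
      have ihe := ih hm'
      rw [Finset.prod_Icc_succ_top h1]
      have hane : a (m + 1) ≠ 0 := ne_of_gt hae
      have hstep : e (m + 1 + 1) - e (m + 1) = b (m + 1) / a (m + 1) * (e (m + 1) - e m) := by
        rw [div_mul_eq_mul_div, eq_div_iff hane]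
        linear_combination hr
      rw [hstep, ihe]
      ring
  have key : e 1 = 0 := by
    have tel := Finset.sum_range_sub (fun y => e y) n
    have h2 : ∑ i ∈ range n, (e (i + 1) - e i) =
        (∑ i ∈ range n, ∏ l ∈ Icc 1 i, b l / a l) * e 1 := by
      rw [Finset.sum_mul]
      refine Finset.sum_congr rfl fun i hi => ?_
      exact hd i (by have := mem_range.mp hi; omega)
    have hpos : 0 < ∑ i ∈ range n, ∏ l ∈ Icc 1 i, b l / a l := by
      refine Finset.sum_pos (fun i hi => ?_) ⟨0, mem_range.mpr hn⟩
      refine Finset.prod_pos fun l hl => ?_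
      have hl' := mem_Icc.mp hl
      have hi' := mem_range.mp hi
      exact div_pos (hb l hl'.1 (by omega)) (ha l hl'.1 (by omega))
    have hz : (∑ i ∈ range n, ∏ l ∈ Icc 1 i, b l / a l) * e 1 = 0 := by
      rw [← h2, tel, h0, hN]; ring
    exact (mul_eq_zero.mp hz).resolve_left (ne_of_gt hpos)
  have hall : ∀ y, y ≤ n → e y = 0 := by
    intro y
    induction y with
    | zero => intro _; exact h0
    | succ m ih =>
      intro hm
      have h1 := hd m (by omega)
      rw [key, mul_zero] at h1
      have h2 := ih (by omega)
      linarith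
  exact hall

noncomputable def bdD (n : ℕ) (a b : ℕ → ℝ) : ℝ :=
  ∑ i ∈ Icc 1 n, (∏ j ∈ Icc i (n - 1), a j) * ∏ j ∈ Icc 1 (i - 1), b j

noncomputable def bdG (n : ℕ) (a b : ℕ → ℝ) (y j : ℕ) : ℝ :=
  (∑ k ∈ Icc 1 (min y j), (∏ l ∈ Icc k (j - 1), a l) * ∏ l ∈ Icc 1 (k - 1), b l) *
    ∑ k ∈ Icc (max y j + 1) n, (∏ l ∈ Icc k (n - 1), a l) * ∏ l ∈ Icc (j + 1) (k - 1), b l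

noncomputable def bdS (n : ℕ) (a b : ℕ → ℝ) (y : ℕ) : ℝ :=
  ∑ j ∈ Icc 1 (n - 1), bdG n a b y j

lemma bdS_zero (n : ℕ) (a b : ℕ → ℝ) : bdS n a b 0 = 0 := by
  refine Finset.sum_eq_zero fun j hj => ?_
  simp [bdG]

lemma bdS_top (n : ℕ) (a b : ℕ → ℝ) : bdS n a b n = 0 := by
  refine Finset.sum_eq_zero fun j hj => ?_
  have hj' := mem_Icc.mp hj
  have hmax : max n j = n := max_eq_left (by omega)
  simp [bdG, hmax]

lemma bdD_pos (n : ℕ) (hn : 1 ≤ n) (a b : ℕ → ℝ)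
    (ha : ∀ y, 1 ≤ y → y ≤ n - 1 → 0 < a y)
    (hb : ∀ y, 1 ≤ y → y ≤ n - 1 → 0 < b y) : 0 < bdD n a b := by
  refine Finset.sum_pos (fun i hi => ?_) ⟨1, mem_Icc.mpr ⟨le_refl 1, hn⟩⟩
  have hi' := mem_Icc.mp hi
  refine mul_pos (Finset.prod_pos fun l hl => ?_) (Finset.prod_pos fun l hl => ?_)
  · have hl' := mem_Icc.mp hl
    exact ha l (by omega) (by omega)
  · have hl' := mem_Icc.mp hl
    exact hb l (by omega) (by omega)

lemma bdS_rec (n : ℕ) (a b : ℕ → ℝ)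
    (ha : ∀ y, 1 ≤ y → y ≤ n - 1 → 0 < a y)
    (hb : ∀ y, 1 ≤ y → y ≤ n - 1 → 0 < b y)
    (y : ℕ) (hy1 : 1 ≤ y) (hy2 : y ≤ n - 1) :
    a y * bdS n a b (y + 1) + b y * bdS n a b (y - 1) =
      (a y + b y) * bdS n a b y - bdD n a b := by
  have hyn : y ≤ n - 1 := hy2
  have hn2 : 2 ≤ n := by omega
  have key : ∑ j ∈ Icc 1 (n - 1),
      (a y * bdG n a b (y + 1) j + b y * bdG n a b (y - 1) j -
        (a y + b y) * bdG n a b y j) = -bdD n a b := by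
    rw [Finset.sum_eq_single_of_mem y (mem_Icc.mpr ⟨hy1, hy2⟩)]
    · -- the j = y term
      unfold bdG
      have hm1 : min (y + 1) y = y := by omega
      have hM1 : max (y + 1) y = y + 1 := by omega
      have hm2 : min (y - 1) y = y - 1 := by omega
      have hM2 : max (y - 1) y = y := by omega
      have hm3 : min y y = y := by omega
      have hM3 : max y y = y := by omega
      rw [hm1, hM1, hm2, hM2, hm3, hM3]
      have hsplitA : ∑ k ∈ Icc 1 y, (∏ l ∈ Icc k (y - 1), a l) * ∏ l ∈ Icc 1 (k - 1), b l =
          (∑ k ∈ Icc 1 (y - 1), (∏ l ∈ Icc k (y - 1), a l) * ∏ l ∈ Icc 1 (k - 1), b l) +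
            (∏ l ∈ Icc y (y - 1), a l) * ∏ l ∈ Icc 1 (y - 1), b l := by
        have : y = (y - 1) + 1 := by omega
        rw [this, Finset.sum_Icc_succ_top (by omega), ← this]
      have hsplitB : ∑ k ∈ Icc (y + 1) n, (∏ l ∈ Icc k (n - 1), a l) *
            ∏ l ∈ Icc (y + 1) (k - 1), b l =
          ((∏ l ∈ Icc (y + 1) (n - 1), a l) * ∏ l ∈ Icc (y + 1) (y + 1 - 1), b l) +
            ∑ k ∈ Icc (y + 2) n, (∏ l ∈ Icc k (n - 1), a l) *
              ∏ l ∈ Icc (y + 1) (k - 1), b l := by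
        exact bd_sum_Icc_bot (by omega) _
      have hIccE : Icc y (y - 1) = (∅ : Finset ℕ) := by
        rw [Finset.Icc_eq_empty_iff]; omega
      have hIccE2 : Icc (y + 1) (y + 1 - 1) = (∅ : Finset ℕ) := by
        rw [Finset.Icc_eq_empty_iff]; omega
      -- Delta split
      have hDsplit : bdD n a b =
          (∑ k ∈ Icc 1 y, (∏ l ∈ Icc k (n - 1), a l) * ∏ l ∈ Icc 1 (k - 1), b l) +
            ∑ k ∈ Icc (y + 1) n, (∏ l ∈ Icc k (n - 1), a l) * ∏ l ∈ Icc 1 (k - 1), b l := by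
        unfold bdD
        have h1 : Icc 1 y = Ioc 0 y := by rw [← Finset.Icc_add_one_left_eq_Ioc]; rfl
        have h2 : Icc (y + 1) n = Ioc y n := by rw [← Finset.Icc_add_one_left_eq_Ioc]
        have h3 : Icc 1 n = Ioc 0 n := by rw [← Finset.Icc_add_one_left_eq_Ioc]; rfl
        rw [h1, h2, h3, Finset.sum_Ioc_consecutive _ (by omega) (by omega)]
      -- first identification
      have hA : (a y * ((∏ l ∈ Icc (y + 1) (n - 1), a l))) *
            (∑ k ∈ Icc 1 y, (∏ l ∈ Icc k (y - 1), a l) * ∏ l ∈ Icc 1 (k - 1), b l) =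
          ∑ k ∈ Icc 1 y, (∏ l ∈ Icc k (n - 1), a l) * ∏ l ∈ Icc 1 (k - 1), b l := by
        rw [Finset.mul_sum]
        refine Finset.sum_congr rfl fun k hk => ?_
        have hk' := mem_Icc.mp hk
        have hay : a y * ∏ l ∈ Icc (y + 1) (n - 1), a l = ∏ l ∈ Icc y (n - 1), a l :=
          (bd_prod_Icc_bot (by omega) a).symm
        rw [hay, ← bd_prod_glue a hk'.1 hk'.2 (by omega : y ≤ n - 1 + 1)]
        ring
      have hB : (b y * (∏ l ∈ Icc 1 (y - 1), b l)) *
            (∑ k ∈ Icc (y + 1) n, (∏ l ∈ Icc k (n - 1), a l) * ∏ l ∈ Icc (y + 1) (k - 1), b l) =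
          ∑ k ∈ Icc (y + 1) n, (∏ l ∈ Icc k (n - 1), a l) * ∏ l ∈ Icc 1 (k - 1), b l := by
        have hby : b y * ∏ l ∈ Icc 1 (y - 1), b l = ∏ l ∈ Icc 1 y, b l := by
          rw [mul_comm]
          have := bd_prod_glue b (k := 1) (y := y) (m := y) (by omega) hy1 (by omega)
          rw [← this]
          congr 1
          rw [Finset.Icc_self, Finset.prod_singleton]
        rw [hby, Finset.mul_sum]
        refine Finset.sum_congr rfl fun k hk => ?_
        have hk' := mem_Icc.mp hk
        have hgl : (∏ l ∈ Icc 1 y, b l) * ∏ l ∈ Icc (y + 1) (k - 1), b l =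
            ∏ l ∈ Icc 1 (k - 1), b l := by
          have := bd_prod_glue b (k := 1) (y := y + 1) (m := k - 1) (by omega) (by omega) (by omega)
          simpa using this
        rw [← hgl]
        ring
      rw [hDsplit, ← hA, ← hB, hsplitA, hsplitB, hIccE, hIccE2]
      simp only [Finset.prod_empty, one_mul, mul_one]
      ring
    · -- the j ≠ y terms vanish
      intro j hj hne
      have hj' := mem_Icc.mp hj
      rcases lt_or_gt_of_ne hne with hlt | hgt
      · -- j < y
        unfold bdG
        have hm1 : min (y + 1) j = j := by omega
        have hm2 : min (y - 1) j = j := by omega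
        have hm3 : min y j = j := by omega
        have hM1 : max (y + 1) j = y + 1 := by omega
        have hM2 : max (y - 1) j = y - 1 := by omega
        have hM3 : max y j = y := by omega
        rw [hm1, hm2, hm3, hM1, hM2, hM3]
        have hy1' : y - 1 + 1 = y := by omega
        rw [hy1']
        have hsplit1 : ∑ k ∈ Icc y n, (∏ l ∈ Icc k (n - 1), a l) *
              ∏ l ∈ Icc (j + 1) (k - 1), b l =
            ((∏ l ∈ Icc y (n - 1), a l) * ∏ l ∈ Icc (j + 1) (y - 1), b l) +
              ∑ k ∈ Icc (y + 1) n, (∏ l ∈ Icc k (n - 1), a l) *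
                ∏ l ∈ Icc (j + 1) (k - 1), b l := bd_sum_Icc_bot (by omega) _
        have hsplit2 : ∑ k ∈ Icc (y + 1) n, (∏ l ∈ Icc k (n - 1), a l) *
              ∏ l ∈ Icc (j + 1) (k - 1), b l =
            ((∏ l ∈ Icc (y + 1) (n - 1), a l) * ∏ l ∈ Icc (j + 1) (y + 1 - 1), b l) +
              ∑ k ∈ Icc (y + 1 + 1) n, (∏ l ∈ Icc k (n - 1), a l) *
                ∏ l ∈ Icc (j + 1) (k - 1), b l := bd_sum_Icc_bot (by omega) _
        rw [hsplit1, hsplit2]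
        have hkey : b y * ((∏ l ∈ Icc y (n - 1), a l) * ∏ l ∈ Icc (j + 1) (y - 1), b l) =
            a y * ((∏ l ∈ Icc (y + 1) (n - 1), a l) * ∏ l ∈ Icc (j + 1) (y + 1 - 1), b l) := by
          have h1 : ∏ l ∈ Icc y (n - 1), a l = a y * ∏ l ∈ Icc (y + 1) (n - 1), a l :=
            bd_prod_Icc_bot (by omega) a
          have h2 : ∏ l ∈ Icc (j + 1) (y + 1 - 1), b l =
              (∏ l ∈ Icc (j + 1) (y - 1), b l) * b y := by
            have hsimp : y + 1 - 1 = y := by omega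
            rw [hsimp]
            have := bd_prod_glue b (k := j + 1) (y := y) (m := y) (by omega) (by omega) (by omega)
            rw [← this, Finset.Icc_self, Finset.prod_singleton]
          rw [h1, h2]; ring
        linear_combination (∑ k ∈ Icc 1 j, (∏ l ∈ Icc k (j - 1), a l) *
          ∏ l ∈ Icc 1 (k - 1), b l) * hkey
      · -- j > y
        unfold bdG
        have hm1 : min (y + 1) j = y + 1 := by omega
        have hm2 : min (y - 1) j = y - 1 := by omega
        have hm3 : min y j = y := by omega
        have hM1 : max (y + 1) j = j := by omega
        have hM2 : max (y - 1) j = j := by omega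
        have hM3 : max y j = j := by omega
        rw [hm1, hm2, hm3, hM1, hM2, hM3]
        have hsplit1 : ∑ k ∈ Icc 1 (y + 1), (∏ l ∈ Icc k (j - 1), a l) *
              ∏ l ∈ Icc 1 (k - 1), b l =
            (∑ k ∈ Icc 1 y, (∏ l ∈ Icc k (j - 1), a l) * ∏ l ∈ Icc 1 (k - 1), b l) +
              (∏ l ∈ Icc (y + 1) (j - 1), a l) * ∏ l ∈ Icc 1 (y + 1 - 1), b l :=
          Finset.sum_Icc_succ_top (by omega) _
        have hsplit2 : ∑ k ∈ Icc 1 y, (∏ l ∈ Icc k (j - 1), a l) *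
              ∏ l ∈ Icc 1 (k - 1), b l =
            (∑ k ∈ Icc 1 (y - 1), (∏ l ∈ Icc k (j - 1), a l) * ∏ l ∈ Icc 1 (k - 1), b l) +
              (∏ l ∈ Icc y (j - 1), a l) * ∏ l ∈ Icc 1 (y - 1), b l := by
          have hy' : y = (y - 1) + 1 := by omega
          rw [hy', Finset.sum_Icc_succ_top (by omega), ← hy']
        rw [hsplit1, hsplit2]
        have hkey : a y * ((∏ l ∈ Icc (y + 1) (j - 1), a l) * ∏ l ∈ Icc 1 (y + 1 - 1), b l) =
            b y * ((∏ l ∈ Icc y (j - 1), a l) * ∏ l ∈ Icc 1 (y - 1), b l) := by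
          have h1 : ∏ l ∈ Icc y (j - 1), a l = a y * ∏ l ∈ Icc (y + 1) (j - 1), a l :=
            bd_prod_Icc_bot (by omega) a
          have h2 : ∏ l ∈ Icc 1 (y + 1 - 1), b l = (∏ l ∈ Icc 1 (y - 1), b l) * b y := by
            have hsimp : y + 1 - 1 = y := by omega
            rw [hsimp]
            have := bd_prod_glue b (k := 1) (y := y) (m := y) (by omega) (by omega) (by omega)
            rw [← this, Finset.Icc_self, Finset.prod_singleton]
          rw [h1, h2]; ring
        linear_combination (∑ k ∈ Icc (j + 1) n, (∏ l ∈ Icc k (n - 1), a l) *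
          ∏ l ∈ Icc (j + 1) (k - 1), b l) * hkey
  rw [Finset.sum_sub_distrib, Finset.sum_add_distrib] at key
  unfold bdS
  rw [Finset.mul_sum, Finset.mul_sum, Finset.mul_sum]
  linarith [key]

/-- Expected absorption time of the birth-death chain on `{0,...,n}`:
`τ_y = (1/Δ) ∑_{j=1}^{n-1} (∑_{k=1}^{min(y,j)} ∏_{l=k}^{j-1} a_l ∏_{l=1}^{k-1} b_l)
      (∑_{k=max(y,j)+1}^{n} ∏_{l=k}^{n-1} a_l ∏_{l=j+1}^{k-1} b_l)`. -/
theorem expected_absorption_time (n : ℕ) (hn : 1 ≤ n) (a b τ : ℕ → ℝ)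
    (ha : ∀ y, 1 ≤ y → y ≤ n - 1 → 0 < a y)
    (hb : ∀ y, 1 ≤ y → y ≤ n - 1 → 0 < b y)
    (hab : ∀ y, 1 ≤ y → y ≤ n - 1 → a y + b y ≤ 1)
    (hτ0 : τ 0 = 0) (hτn : τ n = 0)
    (hrec : ∀ y, 1 ≤ y → y ≤ n - 1 →
      τ y = 1 + a y * τ (y + 1) + b y * τ (y - 1) + (1 - a y - b y) * τ y) :
    ∀ y ≤ n, τ y =
      (1 / (∑ i ∈ Icc 1 n, (∏ j ∈ Icc i (n - 1), a j) * ∏ j ∈ Icc 1 (i - 1), b j)) *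
        ∑ j ∈ Icc 1 (n - 1),
          (∑ k ∈ Icc 1 (min y j), (∏ l ∈ Icc k (j - 1), a l) * ∏ l ∈ Icc 1 (k - 1), b l) *
            ∑ k ∈ Icc (max y j + 1) n,
              (∏ l ∈ Icc k (n - 1), a l) * ∏ l ∈ Icc (j + 1) (k - 1), b l := by
  have hD := bdD_pos n hn a b ha hb
  have hDne : bdD n a b ≠ 0 := ne_of_gt hD
  set F : ℕ → ℝ := fun y => (1 / bdD n a b) * bdS n a b y with hF
  have he : ∀ y ≤ n, τ y - F y = 0 := by
    refine bd_uniq n hn a b (fun y => τ y - F y) ha hb ?_ ?_ ?_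
    · simp [hF, hτ0, bdS_zero]
    · simp [hF, hτn, bdS_top]
    · intro y h1 h2
      have hS := bdS_rec n a b ha hb y h1 h2
      have hτ := hrec y h1 h2
      -- a y * τ(y+1) + b y * τ(y-1) = (a y + b y) * τ y - 1
      have hτ' : a y * τ (y + 1) + b y * τ (y - 1) = (a y + b y) * τ y - 1 := by linarith
      have hF' : a y * F (y + 1) + b y * F (y - 1) = (a y + b y) * F y - 1 := by
        simp only [hF]
        field_simp
        linarith [hS]
      show a y * (τ (y + 1) - F (y + 1)) + b y * (τ (y - 1) - F (y - 1)) =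
        (a y + b y) * (τ y - F y)
      linarith
  intro y hy
  have := he y hy
  have hτF : τ y = F y := by linarith
  rw [hτF]
  simp only [hF, bdD, bdS, bdG]
end
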